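/- Let U(p) = β√(1+‖p‖²) on ℝ^d with β > 0. Then ∇U(p)·(p/‖p‖) = β‖p‖/√(1+‖p‖²) ≥ β/√2 for all ‖p‖ ≥ 1. Consequently, for W(p) = e^{c‖p‖} with 0 < c and R ≥ 1 such that (d−1)/R + c ≤ β/(2√2), one has ΔW(p) − ∇U(p)·∇W(p) ≤ −(cβ/(4√2)) W(p) for all ‖p‖ ≥ R. -/

import Mathlib

/-- The Laplacian of `f : ℝ^d → ℝ` as the sum of second directional derivatives
along the standard orthonormal basis. -/
noncomputable def lap {d : ℕ} (f : EuclideanSpace ℝ (Fin d) → ℝ)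
    (x : EuclideanSpace ℝ (Fin d)) : ℝ :=
  ∑ i : Fin d,
    fderiv ℝ (fun y => fderiv ℝ f y (EuclideanSpace.single i 1)) x (EuclideanSpace.single i 1)

section Stmt17Aux

variable {d : ℕ}

private lemma myHasFDerivAt_norm (p : EuclideanSpace ℝ (Fin d)) (hp : p ≠ 0) :
    HasFDerivAt (fun q : EuclideanSpace ℝ (Fin d) => ‖q‖) ((‖p‖)⁻¹ • innerSL ℝ p) p := by
  have hsq : HasFDerivAt (fun q : EuclideanSpace ℝ (Fin d) => ‖q‖ ^ 2)
      (2 • innerSL ℝ p) p := by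
    simpa using (hasFDerivAt_id (𝕜 := ℝ) p).norm_sq
  have hne : ‖p‖ ^ 2 ≠ 0 := pow_ne_zero _ (norm_ne_zero_iff.2 hp)
  have h2 := (Real.hasDerivAt_sqrt hne).comp_hasFDerivAt p hsq
  have hfun : (Real.sqrt ∘ fun q : EuclideanSpace ℝ (Fin d) => ‖q‖ ^ 2)
      = fun q : EuclideanSpace ℝ (Fin d) => ‖q‖ := by
    funext q; simp [Function.comp, Real.sqrt_sq (norm_nonneg q)]
  rw [hfun] at h2
  refine h2.congr_fderiv ?_
  ext v
  have hn : ‖p‖ ≠ 0 := norm_ne_zero_iff.2 hp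
  simp [Real.sqrt_sq (norm_nonneg p)]
  field_simp

private lemma myGradAux (f : EuclideanSpace ℝ (Fin d) → ℝ) (a : ℝ)
    (p x : EuclideanSpace ℝ (Fin d))
    (h : HasFDerivAt f (a • innerSL ℝ p) x) : HasGradientAt f (a • p) x := by
  rw [hasGradientAt_iff_hasFDerivAt]
  refine h.congr_fderiv ?_
  ext v
  simp [inner_smul_left]

private lemma myHasFDerivAt_U (β : ℝ) (p : EuclideanSpace ℝ (Fin d)) :
    HasFDerivAt (fun q : EuclideanSpace ℝ (Fin d) => β * Real.sqrt (1 + ‖q‖ ^ 2))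
      ((β / Real.sqrt (1 + ‖p‖ ^ 2)) • innerSL ℝ p) p := by
  have hsq : HasFDerivAt (fun q : EuclideanSpace ℝ (Fin d) => 1 + ‖q‖ ^ 2)
      (2 • innerSL ℝ p) p := by
    simpa using ((hasFDerivAt_id (𝕜 := ℝ) p).norm_sq).const_add 1
  have hpos : (0:ℝ) < 1 + ‖p‖ ^ 2 := by positivity
  have h2 := ((Real.hasDerivAt_sqrt hpos.ne').comp_hasFDerivAt p hsq).const_mul β
  have hfun : (fun q : EuclideanSpace ℝ (Fin d) =>
      β * (Real.sqrt ∘ fun q : EuclideanSpace ℝ (Fin d) => 1 + ‖q‖ ^ 2) q)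
      = fun q : EuclideanSpace ℝ (Fin d) => β * Real.sqrt (1 + ‖q‖ ^ 2) := rfl
  rw [hfun] at h2
  refine h2.congr_fderiv ?_
  ext v
  have hs : Real.sqrt (1 + ‖p‖ ^ 2) ≠ 0 := (Real.sqrt_pos.2 hpos).ne'
  simp
  field_simp

private lemma myHasFDerivAt_W (c : ℝ) (p : EuclideanSpace ℝ (Fin d)) (hp : p ≠ 0) :
    HasFDerivAt (fun q : EuclideanSpace ℝ (Fin d) => Real.exp (c * ‖q‖))
      ((c * Real.exp (c * ‖p‖) * (‖p‖)⁻¹) • innerSL ℝ p) p := by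
  have hcn : HasFDerivAt (fun q : EuclideanSpace ℝ (Fin d) => c * ‖q‖)
      (c • ((‖p‖)⁻¹ • innerSL ℝ p)) p := (myHasFDerivAt_norm p hp).const_mul c
  have h2 := (Real.hasDerivAt_exp (c * ‖p‖)).comp_hasFDerivAt p hcn
  have hfun : (Real.exp ∘ fun q : EuclideanSpace ℝ (Fin d) => c * ‖q‖)
      = fun q : EuclideanSpace ℝ (Fin d) => Real.exp (c * ‖q‖) := rfl
  rw [hfun] at h2
  refine h2.congr_fderiv ?_
  ext v
  simp
  ring

private lemma myLap (c : ℝ) (p : EuclideanSpace ℝ (Fin d)) (hp : p ≠ 0) :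
    lap (fun q : EuclideanSpace ℝ (Fin d) => Real.exp (c * ‖q‖)) p
      = c * (((d:ℝ) - 1) / ‖p‖ + c) * Real.exp (c * ‖p‖) := by
  have hn : ‖p‖ ≠ 0 := norm_ne_zero_iff.2 hp
  have key : ∀ i : Fin d,
      fderiv ℝ (fun y => fderiv ℝ (fun q : EuclideanSpace ℝ (Fin d) => Real.exp (c * ‖q‖)) y
          (EuclideanSpace.single i 1)) p (EuclideanSpace.single i 1)
        = c * Real.exp (c * ‖p‖) * (‖p‖)⁻¹
          + (p i)^2 * (c * Real.exp (c * ‖p‖) *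
            ((c * (‖p‖)⁻¹ * (‖p‖)⁻¹) - ((‖p‖^2)⁻¹ * (‖p‖)⁻¹))) := by
    intro i
    set ei : EuclideanSpace ℝ (Fin d) := EuclideanSpace.single i 1 with hei
    have hev : (fun y => fderiv ℝ (fun q : EuclideanSpace ℝ (Fin d) => Real.exp (c * ‖q‖)) y ei)
        =ᶠ[nhds p] (fun y => (c * Real.exp (c * ‖y‖) * (‖y‖)⁻¹) * (inner ℝ ei y : ℝ)) := by
      filter_upwards [IsOpen.mem_nhds isOpen_compl_singleton hp] with y hy
      have h := (myHasFDerivAt_W c y hy).fderiv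
      rw [h]
      rw [real_inner_comm y ei]
      simp only [ContinuousLinearMap.smul_apply, innerSL_apply_apply, smul_eq_mul]
    rw [hev.fderiv_eq]
    have hA : HasFDerivAt (fun y : EuclideanSpace ℝ (Fin d) => c * Real.exp (c * ‖y‖))
        (c • ((c * Real.exp (c * ‖p‖) * (‖p‖)⁻¹) • innerSL ℝ p)) p :=
      (myHasFDerivAt_W c p hp).const_mul c
    have hB : HasFDerivAt (fun y : EuclideanSpace ℝ (Fin d) => (‖y‖)⁻¹)
        ((-(‖p‖ ^ 2)⁻¹) • ((‖p‖)⁻¹ • innerSL ℝ p)) p :=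
      (hasDerivAt_inv hn).comp_hasFDerivAt p (myHasFDerivAt_norm p hp)
    have hG : HasFDerivAt (fun y : EuclideanSpace ℝ (Fin d) => (inner ℝ ei y : ℝ))
        (innerSL ℝ ei) p := (innerSL ℝ ei).hasFDerivAt
    have hgi := (hA.mul hB).mul hG
    have hgi' : HasFDerivAt (fun y : EuclideanSpace ℝ (Fin d) => c * Real.exp (c * ‖y‖) * (‖y‖)⁻¹ * (inner ℝ ei y : ℝ)) _ p := hgi
    rw [hgi'.fderiv]
    have h1 : (inner ℝ ei ei : ℝ) = 1 := by
      simp [hei, EuclideanSpace.inner_single_left, EuclideanSpace.single_apply]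
    have h2 : (inner ℝ p ei : ℝ) = p i := by
      simp [hei, real_inner_comm, EuclideanSpace.inner_single_left, EuclideanSpace.inner_single_right]
    have h3 : (inner ℝ ei p : ℝ) = p i := by
      simp [hei, EuclideanSpace.inner_single_left]
    simp only [ContinuousLinearMap.add_apply, ContinuousLinearMap.smul_apply,
      innerSL_apply_apply, ContinuousLinearMap.coe_smul', Pi.smul_apply, smul_eq_mul, Pi.mul_apply,
      h1, h2, h3]
    ring
  have hsum : ∑ i : Fin d, (p i)^2 = ‖p‖^2 := by
    rw [EuclideanSpace.norm_eq, Real.sq_sqrt (by positivity)]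
    simp [Real.norm_eq_abs, sq_abs]
  rw [lap]
  simp only [key]
  rw [Finset.sum_add_distrib]
  have hM : ∑ x : Fin d, (p x)^2 * (c * Real.exp (c * ‖p‖) *
        ((c * (‖p‖)⁻¹ * (‖p‖)⁻¹) - ((‖p‖^2)⁻¹ * (‖p‖)⁻¹)))
      = ‖p‖^2 * (c * Real.exp (c * ‖p‖) *
        ((c * (‖p‖)⁻¹ * (‖p‖)⁻¹) - ((‖p‖^2)⁻¹ * (‖p‖)⁻¹))) := by
    rw [← Finset.sum_mul, hsum]
  rw [hM, Finset.sum_const, Finset.card_univ, Fintype.card_fin, nsmul_eq_mul]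
  field_simp
  ring

private lemma myRad (β : ℝ) (hβ : 0 < β) (n : ℝ) (hn : 1 ≤ n) :
    β / Real.sqrt 2 ≤ β * n / Real.sqrt (1 + n ^ 2) := by
  have ht : (0:ℝ) < Real.sqrt 2 := Real.sqrt_pos.2 (by norm_num)
  have hs : (0:ℝ) < Real.sqrt (1 + n ^ 2) := Real.sqrt_pos.2 (by positivity)
  have hst : Real.sqrt (1 + n ^ 2) ≤ Real.sqrt 2 * n := by
    have h1 : (1 : ℝ) + n ^ 2 ≤ 2 * n ^ 2 := by nlinarith
    calc Real.sqrt (1 + n ^ 2) ≤ Real.sqrt (2 * n ^ 2) := Real.sqrt_le_sqrt h1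
      _ = Real.sqrt 2 * n := by
          rw [Real.sqrt_mul (by norm_num), Real.sqrt_sq (by linarith)]
  rw [div_le_div_iff₀ ht hs]
  nlinarith

end Stmt17Aux

/-- for the ROUP potential `U(p) = β√(1+‖p‖²)`:
(1) the radial derivative `∇U(p)·(p/‖p‖) = β‖p‖/√(1+‖p‖²) ≥ β/√2` for `‖p‖ ≥ 1`;
(2) for `W(p) = e^{c‖p‖}` with `0 < c` and `R ≥ 1` such that `(d-1)/R + c ≤ β/(2√2)`,
`ΔW(p) - ∇U(p)·∇W(p) ≤ -(cβ/(4√2)) W(p)` for all `‖p‖ ≥ R`. -/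
theorem stmt_17 (d : ℕ) (hd : 1 ≤ d) (β c R : ℝ) (hβ : 0 < β) (hc : 0 < c)
    (hR : 1 ≤ R) (hsmall : ((d:ℝ) - 1) / R + c ≤ β / (2 * Real.sqrt 2)) :
    (∀ p : EuclideanSpace ℝ (Fin d), 1 ≤ ‖p‖ →
      (inner ℝ (gradient (fun q : EuclideanSpace ℝ (Fin d) =>
          β * Real.sqrt (1 + ‖q‖^2)) p) ((‖p‖)⁻¹ • p) : ℝ)
        = β * ‖p‖ / Real.sqrt (1 + ‖p‖^2) ∧
      β / Real.sqrt 2 ≤ β * ‖p‖ / Real.sqrt (1 + ‖p‖^2)) ∧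
    (∀ p : EuclideanSpace ℝ (Fin d), R ≤ ‖p‖ →
      lap (fun q : EuclideanSpace ℝ (Fin d) => Real.exp (c * ‖q‖)) p
        - (inner ℝ (gradient (fun q : EuclideanSpace ℝ (Fin d) =>
              β * Real.sqrt (1 + ‖q‖^2)) p)
            (gradient (fun q : EuclideanSpace ℝ (Fin d) => Real.exp (c * ‖q‖)) p) : ℝ)
        ≤ -(c * β / (4 * Real.sqrt 2)) * Real.exp (c * ‖p‖)) := by
  have ht : (0:ℝ) < Real.sqrt 2 := Real.sqrt_pos.2 (by norm_num)
  constructor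
  · intro p hp1
    have hp : p ≠ 0 := by
      intro h; rw [h, norm_zero] at hp1; linarith
    have hn : ‖p‖ ≠ 0 := norm_ne_zero_iff.2 hp
    have hs : (0:ℝ) < Real.sqrt (1 + ‖p‖ ^ 2) := Real.sqrt_pos.2 (by positivity)
    have hgU : gradient (fun q : EuclideanSpace ℝ (Fin d) => β * Real.sqrt (1 + ‖q‖^2)) p
        = (β / Real.sqrt (1 + ‖p‖ ^ 2)) • p :=
      (myGradAux _ _ _ _ (myHasFDerivAt_U β p)).gradient
    constructor
    · rw [hgU, real_inner_smul_left, real_inner_smul_right, real_inner_self_eq_norm_sq]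
      field_simp
    · exact myRad β hβ ‖p‖ hp1
  · intro p hRp
    have hp1 : 1 ≤ ‖p‖ := le_trans hR hRp
    have hp : p ≠ 0 := by
      intro h; rw [h, norm_zero] at hp1; linarith
    have hn : ‖p‖ ≠ 0 := norm_ne_zero_iff.2 hp
    have hs : (0:ℝ) < Real.sqrt (1 + ‖p‖ ^ 2) := Real.sqrt_pos.2 (by positivity)
    have hEx : (0:ℝ) < Real.exp (c * ‖p‖) := Real.exp_pos _
    have hgU : gradient (fun q : EuclideanSpace ℝ (Fin d) => β * Real.sqrt (1 + ‖q‖^2)) p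
        = (β / Real.sqrt (1 + ‖p‖ ^ 2)) • p :=
      (myGradAux _ _ _ _ (myHasFDerivAt_U β p)).gradient
    have hgW : gradient (fun q : EuclideanSpace ℝ (Fin d) => Real.exp (c * ‖q‖)) p
        = (c * Real.exp (c * ‖p‖) * (‖p‖)⁻¹) • p :=
      (myGradAux _ _ _ _ (myHasFDerivAt_W c p hp)).gradient
    rw [myLap c p hp, hgU, hgW, real_inner_smul_left, real_inner_smul_right,
      real_inner_self_eq_norm_sq]
    have hinner : β / Real.sqrt (1 + ‖p‖ ^ 2) * (c * Real.exp (c * ‖p‖) * (‖p‖)⁻¹ * ‖p‖ ^ 2)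
        = c * Real.exp (c * ‖p‖) * (β * ‖p‖ / Real.sqrt (1 + ‖p‖ ^ 2)) := by
      field_simp
    rw [hinner]
    have hd1 : ((d:ℝ) - 1) / ‖p‖ ≤ ((d:ℝ) - 1) / R := by
      have hd0 : (0:ℝ) ≤ (d:ℝ) - 1 := by
        have : (1:ℝ) ≤ (d:ℝ) := by exact_mod_cast hd
        linarith
      gcongr
    have hX : ((d:ℝ) - 1) / ‖p‖ + c ≤ β / (2 * Real.sqrt 2) := by linarith
    have hrad : β / Real.sqrt 2 ≤ β * ‖p‖ / Real.sqrt (1 + ‖p‖ ^ 2) := myRad β hβ ‖p‖ hp1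
    have k1 : c * (((d:ℝ) - 1) / ‖p‖ + c) * Real.exp (c * ‖p‖)
        ≤ c * (β / (2 * Real.sqrt 2)) * Real.exp (c * ‖p‖) := by
      gcongr
    have k2 : c * Real.exp (c * ‖p‖) * (β / Real.sqrt 2)
        ≤ c * Real.exp (c * ‖p‖) * (β * ‖p‖ / Real.sqrt (1 + ‖p‖ ^ 2)) := by
      gcongr
    have k3 : c * (β / (2 * Real.sqrt 2)) * Real.exp (c * ‖p‖)
          - c * Real.exp (c * ‖p‖) * (β / Real.sqrt 2)
        ≤ -(c * β / (4 * Real.sqrt 2)) * Real.exp (c * ‖p‖) := by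
      have heq : c * (β / (2 * Real.sqrt 2)) * Real.exp (c * ‖p‖)
            - c * Real.exp (c * ‖p‖) * (β / Real.sqrt 2)
          = -(c * β / (2 * Real.sqrt 2)) * Real.exp (c * ‖p‖) := by
        field_simp
        ring
      rw [heq]
      have h24 : c * β / (4 * Real.sqrt 2) ≤ c * β / (2 * Real.sqrt 2) := by
        rw [div_le_div_iff₀ (by positivity) (by positivity)]
        nlinarith [mul_pos hc hβ, ht]
      nlinarith
    linarith
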